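/- Let D = {(1,x,y,0,0) ∈ ℝ⁵ : x²+(y-1)² ≤ 1}, D₁ = {(1,x,y,0,0) : x³-(y-1)³ ≤ 1, x ≥ 0, 0 ≤ y ≤ 1}, D₂ = {(1,x,y,0,0) : -x³-(y-1)³ ≤ 1, x ≤ 0, 0 ≤ y ≤ 1}. Then D = conv(D₁ ∪ D) ∩ conv(D₂ ∪ D). -/

import Mathlib

/-- The disk `D = {(1,x,y,0,0) : x² + (y-1)² ≤ 1}`. -/
def diskD : Set (EuclideanSpace ℝ (Fin 5)) :=
  {v | v 0 = 1 ∧ (v 1) ^ 2 + (v 2 - 1) ^ 2 ≤ 1 ∧ v 3 = 0 ∧ v 4 = 0}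

/-- The set `D₁ = {(1,x,y,0,0) : x³ - (y-1)³ ≤ 1, x ≥ 0, 0 ≤ y ≤ 1}`. -/
def setD1 : Set (EuclideanSpace ℝ (Fin 5)) :=
  {v | v 0 = 1 ∧ (v 1) ^ 3 - (v 2 - 1) ^ 3 ≤ 1 ∧ 0 ≤ v 1 ∧ 0 ≤ v 2 ∧ v 2 ≤ 1 ∧
    v 3 = 0 ∧ v 4 = 0}

/-- The set `D₂ = {(1,x,y,0,0) : -x³ - (y-1)³ ≤ 1, x ≤ 0, 0 ≤ y ≤ 1}`. -/
def setD2 : Set (EuclideanSpace ℝ (Fin 5)) :=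
  {v | v 0 = 1 ∧ -(v 1) ^ 3 - (v 2 - 1) ^ 3 ≤ 1 ∧ v 1 ≤ 0 ∧ 0 ≤ v 2 ∧ v 2 ≤ 1 ∧
    v 3 = 0 ∧ v 4 = 0}

lemma comb_apply (a b : ℝ) (x y : EuclideanSpace ℝ (Fin 5)) (i : Fin 5) :
    (a • x + b • y) i = a * x i + b * y i := rfl

lemma diskD_convex : Convex ℝ diskD := by
  intro v hv w hw a b ha hb hab
  obtain ⟨hv0, hv12, hv3, hv4⟩ := hv
  obtain ⟨hw0, hw12, hw3, hw4⟩ := hw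
  have hb2 : b = 1 - a := by linarith
  subst hb2
  refine ⟨?_, ?_, ?_, ?_⟩ <;> simp only [comb_apply]
  · rw [hv0, hw0]; ring_nf
  · nlinarith [mul_nonneg (mul_nonneg ha hb) (sq_nonneg (v 1 - w 1)),
      mul_nonneg (mul_nonneg ha hb) (sq_nonneg (v 2 - w 2)),
      mul_nonneg (mul_nonneg ha ha) (sub_nonneg.2 hv12),
      mul_nonneg (mul_nonneg hb hb) (sub_nonneg.2 hw12),
      mul_nonneg (mul_nonneg ha hb) (sub_nonneg.2 hv12),
      mul_nonneg (mul_nonneg ha hb) (sub_nonneg.2 hw12)]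
  · rw [hv3, hw3]; ring
  · rw [hv4, hw4]; ring

lemma diskD_nonempty : diskD.Nonempty := by
  refine ⟨(WithLp.toLp 2 ![1, 0, 1, 0, 0] : EuclideanSpace ℝ (Fin 5)), ?_, ?_, ?_, ?_⟩ <;> simp [diskD, Fin.isValue] <;> norm_num

lemma setD1_nonempty : setD1.Nonempty := by
  refine ⟨(WithLp.toLp 2 ![1, 0, 0, 0, 0] : EuclideanSpace ℝ (Fin 5)), ?_⟩
  refine ⟨?_, ?_, ?_, ?_, ?_, ?_, ?_⟩ <;> simp [Fin.isValue] <;> norm_num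

lemma setD2_nonempty : setD2.Nonempty := by
  refine ⟨(WithLp.toLp 2 ![1, 0, 0, 0, 0] : EuclideanSpace ℝ (Fin 5)), ?_⟩
  refine ⟨?_, ?_, ?_, ?_, ?_, ?_, ?_⟩ <;> simp [Fin.isValue] <;> norm_num

lemma hull1_subset : convexHull ℝ setD1 ⊆
    {v : EuclideanSpace ℝ (Fin 5) | v 0 = 1 ∧ 0 ≤ v 1 ∧ 0 ≤ v 2 ∧ v 2 ≤ 1 ∧
      v 3 = 0 ∧ v 4 = 0} := by
  apply convexHull_min
  · rintro v ⟨h0, _, h1, h2, h2', h3, h4⟩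
    exact ⟨h0, h1, h2, h2', h3, h4⟩
  · rintro v ⟨hv0, hv1, hv2, hv2', hv3, hv4⟩ w ⟨hw0, hw1, hw2, hw2', hw3, hw4⟩ a b ha hb hab
    refine ⟨?_, ?_, ?_, ?_, ?_, ?_⟩ <;> simp only [comb_apply]
    · rw [hv0, hw0]; ring_nf; linarith
    · nlinarith [mul_nonneg ha hv1, mul_nonneg hb hw1]
    · nlinarith [mul_nonneg ha hv2, mul_nonneg hb hw2]
    · nlinarith [mul_nonneg ha (sub_nonneg.2 hv2'), mul_nonneg hb (sub_nonneg.2 hw2')]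
    · rw [hv3, hw3]; ring
    · rw [hv4, hw4]; ring

lemma hull2_subset : convexHull ℝ setD2 ⊆
    {v : EuclideanSpace ℝ (Fin 5) | v 0 = 1 ∧ v 1 ≤ 0 ∧ 0 ≤ v 2 ∧ v 2 ≤ 1 ∧
      v 3 = 0 ∧ v 4 = 0} := by
  apply convexHull_min
  · rintro v ⟨h0, _, h1, h2, h2', h3, h4⟩
    exact ⟨h0, h1, h2, h2', h3, h4⟩
  · rintro v ⟨hv0, hv1, hv2, hv2', hv3, hv4⟩ w ⟨hw0, hw1, hw2, hw2', hw3, hw4⟩ a b ha hb hab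
    refine ⟨?_, ?_, ?_, ?_, ?_, ?_⟩ <;> simp only [comb_apply]
    · rw [hv0, hw0]; ring_nf; linarith
    · nlinarith [mul_nonneg ha (neg_nonneg.2 hv1), mul_nonneg hb (neg_nonneg.2 hw1)]
    · nlinarith [mul_nonneg ha hv2, mul_nonneg hb hw2]
    · nlinarith [mul_nonneg ha (sub_nonneg.2 hv2'), mul_nonneg hb (sub_nonneg.2 hw2')]
    · rw [hv3, hw3]; ring
    · rw [hv4, hw4]; ring

set_option maxHeartbeats 1600000 in
lemma core1 (p : EuclideanSpace ℝ (Fin 5))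
    (hp : p ∈ convexHull ℝ (setD1 ∪ diskD)) (hp1 : p 1 ≤ 0) : p ∈ diskD := by
  rw [convexHull_union setD1_nonempty diskD_nonempty, diskD_convex.convexHull_eq,
    mem_convexJoin] at hp
  obtain ⟨x, hx, y, hy, a, b, ha, hb, hab, hpe⟩ := hp
  obtain ⟨hx0, hx1, hx2, hx2', hx3, hx4⟩ := hull1_subset hx
  have hyD : y ∈ diskD := hy
  obtain ⟨hy0, hy12, hy3, hy4⟩ := hy
  have hy2l : 0 ≤ y 2 := by nlinarith [sq_nonneg (y 1)]
  have hy2u : y 2 ≤ 2 := by nlinarith [sq_nonneg (y 1)]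
  have hpe1 : a * x 1 + b * y 1 = p 1 := by rw [← hpe]; rfl
  have hb' : b = 1 - a := by linarith
  rcases eq_or_lt_of_le ha with ha0 | hapos
  · have hpy : p = y := by
      rw [← hpe, ← ha0, hb', ← ha0]; simp
    rw [hpy]; exact hyD
  · rcases le_or_gt 0 (y 1) with hy1 | hy1
    · have hx10 : x 1 = 0 := by nlinarith
      have hxD : x ∈ diskD := ⟨hx0, by nlinarith, hx3, hx4⟩
      rw [← hpe]; exact diskD_convex hxD hyD ha hb hab
    · obtain ⟨t, ht⟩ : ∃ t : ℝ, t = y 1 / (y 1 - x 1) := ⟨_, rfl⟩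
      have hden : y 1 - x 1 < 0 := by linarith
      have ht0 : 0 < t := ht ▸ div_pos_of_neg_of_neg hy1 hden
      have htm : t * (y 1 - x 1) = y 1 := by
        rw [ht]; exact div_mul_cancel₀ _ (ne_of_lt hden)
      have ht1 : t ≤ 1 := by nlinarith
      have hat : a ≤ t := by nlinarith
      obtain ⟨s, hs⟩ : ∃ s : EuclideanSpace ℝ (Fin 5), s = (1 - t) • y + t • x :=
        ⟨_, rfl⟩
      have hsD : s ∈ diskD := by
        refine ⟨?_, ?_, ?_, ?_⟩ <;> simp only [hs, comb_apply]
        · rw [hy0, hx0]; ring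
        · have hs1 : (1 - t) * y 1 + t * x 1 = 0 := by nlinarith
          have hs2l : 0 ≤ (1 - t) * y 2 + t * x 2 := by
            nlinarith [mul_nonneg (by linarith : (0:ℝ) ≤ 1 - t) hy2l,
              mul_nonneg ht0.le hx2]
          have hs2u : (1 - t) * y 2 + t * x 2 ≤ 2 := by
            nlinarith [mul_nonneg (by linarith : (0:ℝ) ≤ 1 - t) (by linarith : (0:ℝ) ≤ 2 - y 2),
              mul_nonneg ht0.le (by linarith : (0:ℝ) ≤ 2 - x 2)]
          nlinarith
        · rw [hy3, hx3]; ring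
        · rw [hy4, hx4]; ring
      have hc : p = (1 - a / t) • y + (a / t) • s := by
        rw [hs, ← hpe, hb']
        have h : a / t * t = a := div_mul_cancel₀ a ht0.ne'
        match_scalars <;> field_simp <;> ring
      have hfrac0 : 0 ≤ a / t := div_nonneg ha ht0.le
      have hfrac1 : 0 ≤ 1 - a / t := by
        rw [sub_nonneg, div_le_one ht0]; exact hat
      rw [hc]
      exact diskD_convex hyD hsD hfrac1 hfrac0 (by ring)

set_option maxHeartbeats 1600000 in
lemma core2 (p : EuclideanSpace ℝ (Fin 5))
    (hp : p ∈ convexHull ℝ (setD2 ∪ diskD)) (hp1 : 0 ≤ p 1) : p ∈ diskD := by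
  rw [convexHull_union setD2_nonempty diskD_nonempty, diskD_convex.convexHull_eq,
    mem_convexJoin] at hp
  obtain ⟨x, hx, y, hy, a, b, ha, hb, hab, hpe⟩ := hp
  obtain ⟨hx0, hx1, hx2, hx2', hx3, hx4⟩ := hull2_subset hx
  have hyD : y ∈ diskD := hy
  obtain ⟨hy0, hy12, hy3, hy4⟩ := hy
  have hy2l : 0 ≤ y 2 := by nlinarith [sq_nonneg (y 1)]
  have hy2u : y 2 ≤ 2 := by nlinarith [sq_nonneg (y 1)]
  have hpe1 : a * x 1 + b * y 1 = p 1 := by rw [← hpe]; rfl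
  have hb' : b = 1 - a := by linarith
  rcases eq_or_lt_of_le ha with ha0 | hapos
  · have hpy : p = y := by
      rw [← hpe, ← ha0, hb', ← ha0]; simp
    rw [hpy]; exact hyD
  · rcases le_or_gt (y 1) 0 with hy1 | hy1
    · have hx10 : x 1 = 0 := by nlinarith
      have hxD : x ∈ diskD := ⟨hx0, by nlinarith, hx3, hx4⟩
      rw [← hpe]; exact diskD_convex hxD hyD ha hb hab
    · obtain ⟨t, ht⟩ : ∃ t : ℝ, t = y 1 / (y 1 - x 1) := ⟨_, rfl⟩
      have hden : 0 < y 1 - x 1 := by linarith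
      have ht0 : 0 < t := ht ▸ div_pos hy1 hden
      have htm : t * (y 1 - x 1) = y 1 := by
        rw [ht]; exact div_mul_cancel₀ _ (ne_of_gt hden)
      have ht1 : t ≤ 1 := by nlinarith
      have hat : a ≤ t := by nlinarith
      obtain ⟨s, hs⟩ : ∃ s : EuclideanSpace ℝ (Fin 5), s = (1 - t) • y + t • x :=
        ⟨_, rfl⟩
      have hsD : s ∈ diskD := by
        refine ⟨?_, ?_, ?_, ?_⟩ <;> simp only [hs, comb_apply]
        · rw [hy0, hx0]; ring
        · have hs1 : (1 - t) * y 1 + t * x 1 = 0 := by nlinarith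
          have hs2l : 0 ≤ (1 - t) * y 2 + t * x 2 := by
            nlinarith [mul_nonneg (by linarith : (0:ℝ) ≤ 1 - t) hy2l,
              mul_nonneg ht0.le hx2]
          have hs2u : (1 - t) * y 2 + t * x 2 ≤ 2 := by
            nlinarith [mul_nonneg (by linarith : (0:ℝ) ≤ 1 - t) (by linarith : (0:ℝ) ≤ 2 - y 2),
              mul_nonneg ht0.le (by linarith : (0:ℝ) ≤ 2 - x 2)]
          nlinarith
        · rw [hy3, hx3]; ring
        · rw [hy4, hx4]; ring
      have hc : p = (1 - a / t) • y + (a / t) • s := by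
        rw [hs, ← hpe, hb']
        have h : a / t * t = a := div_mul_cancel₀ a ht0.ne'
        match_scalars <;> field_simp <;> ring
      have hfrac0 : 0 ≤ a / t := div_nonneg ha ht0.le
      have hfrac1 : 0 ≤ 1 - a / t := by
        rw [sub_nonneg, div_le_one ht0]; exact hat
      rw [hc]
      exact diskD_convex hyD hsD hfrac1 hfrac0 (by ring)

/-- Equation (4.9): `D = conv(D₁ ∪ D) ∩ conv(D₂ ∪ D)`. -/
theorem stmt17 :
    diskD = convexHull ℝ (setD1 ∪ diskD) ∩ convexHull ℝ (setD2 ∪ diskD) := by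
  apply Set.Subset.antisymm
  · intro p hp
    exact ⟨subset_convexHull ℝ _ (Or.inr hp), subset_convexHull ℝ _ (Or.inr hp)⟩
  · rintro p ⟨h1, h2⟩
    rcases le_total (p 1) 0 with h | h
    · exact core1 p h1 h
    · exact core2 p h2 h
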